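/- For all 1 ≤ i,j ≤ n, k ∈ ℤ, and nonzero l ∈ ℤ, the commutator identity [a*_i(l), x*_j⁺(k)] = ([(α_i|α_j)·l]/l) · x*_j⁺(k+l) holds in M_{n+1}(R). -/

import Mathlib

noncomputable section

open LaurentPolynomial

/-- The base field `F = ℚ(q)`. -/
abbrev F : Type := RatFunc ℚ

/-- The Laurent polynomial ring `R = F[z, z⁻¹]`. -/
abbrev R : Type := LaurentPolynomial F

/-- The generator `q` of `ℚ(q)`. -/
def q : F := RatFunc.X

/-- The quantum integer `[m] = (q^m − q^{−m})/(q − q^{−1})`. -/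
def qint (m : ℤ) : F := (q ^ m - q ^ (-m)) / (q - q⁻¹)

/-- The A_n inner product `(α_i|α_j)` on simple roots (1-based indices). -/
def ip (i j : ℕ) : ℤ := if i = j then 2 else if i + 1 = j ∨ j + 1 = i then -1 else 0

/-- The matrix unit `E_{ab} ∈ M_N(R)`, with 1-based labels `a b`. -/
def E (N a b : ℕ) : Matrix (Fin N) (Fin N) R :=
  Matrix.of fun r s => if (r : ℕ) + 1 = a ∧ (s : ℕ) + 1 = b then (1 : R) else 0

/-- The element `(q^c z)^k ∈ R`. -/
def zq (c k : ℤ) : R := C (q ^ (c * k)) * T k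

/-- `x_j⁺(k) = (q^j z)^k E_{j,j+1}` in `M_{n+1}(R)`. -/
def xp (n j : ℕ) (k : ℤ) : Matrix (Fin (n+1)) (Fin (n+1)) R :=
  zq j k • E (n+1) j (j+1)

/-- `x_j⁻(k) = (q^j z)^k E_{j+1,j}` in `M_{n+1}(R)`. -/
def xm (n j : ℕ) (k : ℤ) : Matrix (Fin (n+1)) (Fin (n+1)) R :=
  zq j k • E (n+1) (j+1) j

/-- `a_j(l) = ([l]/l)(q^j z)^l (q^{−l}E_{j,j} − q^l E_{j+1,j+1})` in `M_{n+1}(R)`. -/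
def aop (n j : ℕ) (l : ℤ) : Matrix (Fin (n+1)) (Fin (n+1)) R :=
  (C (qint l / (l : F)) * zq j l) •
    (C (q ^ (-l)) • E (n+1) j j - C (q ^ l) • E (n+1) (j+1) (j+1))

/-- `x*_j⁺(k) = (−q^{−1})(q^{−j}z)^k E_{j+1,j}` in `M_{n+1}(R)`. -/
def xps (n j : ℕ) (k : ℤ) : Matrix (Fin (n+1)) (Fin (n+1)) R :=
  ((-(C q⁻¹)) * zq (-(j : ℤ)) k) • E (n+1) (j+1) j

/-- `x*_j⁻(k) = (−q)(q^{−j}z)^k E_{j,j+1}` in `M_{n+1}(R)`. -/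
def xms (n j : ℕ) (k : ℤ) : Matrix (Fin (n+1)) (Fin (n+1)) R :=
  ((-(C q)) * zq (-(j : ℤ)) k) • E (n+1) j (j+1)

/-- `a*_j(l) = ([l]/l)(q^{−j}z)^l (q^{−l}E_{j+1,j+1} − q^l E_{j,j})` in `M_{n+1}(R)`. -/
def aops (n j : ℕ) (l : ℤ) : Matrix (Fin (n+1)) (Fin (n+1)) R :=
  (C (qint l / (l : F)) * zq (-(j : ℤ)) l) •
    (C (q ^ (-l)) • E (n+1) (j+1) (j+1) - C (q ^ l) • E (n+1) j j)

-- auxiliary lemmas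

lemma hq0 : q ≠ 0 := by unfold q; exact RatFunc.X_ne_zero

lemma qint_neg (m : ℤ) : qint (-m) = - qint m := by
  unfold qint; rw [neg_neg, ← neg_sub, neg_div]

lemma qint_zero : qint 0 = 0 := by unfold qint; simp

lemma qint_two (l : ℤ) : qint (2*l) = qint l * (q^l + q^(-l)) := by
  unfold qint
  rw [div_mul_eq_mul_div]
  congr 1
  rw [show (2:ℤ)*l = l+l by ring, show -(l+l) = -l + -l by ring,
    zpow_add₀ hq0, zpow_add₀ hq0]
  ring

lemma E_mul_E (N a b c d : ℕ) (hb1 : 1 ≤ b) (hbN : b ≤ N) :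
    E N a b * E N c d = if b = c then E N a d else 0 := by
  have ht0 : b - 1 < N := by omega
  ext r s
  rw [Matrix.mul_apply]
  rw [Finset.sum_eq_single (⟨b-1, ht0⟩ : Fin N)]
  · simp only [E, Matrix.of_apply]
    by_cases hbc : b = c <;> split_ifs <;> simp_all
  · intro t _ ht
    simp only [E, Matrix.of_apply]
    have : ¬((t : ℕ) + 1 = b) := by
      intro h; apply ht; apply Fin.ext; simp; omega
    simp [this]
  · intro h; exact absurd (Finset.mem_univ _) h

lemma sE_mul_sE (N a b c d : ℕ) (x y : R) (hb1 : 1 ≤ b) (hbN : b ≤ N) :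
    (x • E N a b) * (y • E N c d) = if b = c then (x*y) • E N a d else 0 := by
  rw [smul_mul_assoc, mul_smul_comm, smul_smul, E_mul_E N a b c d hb1 hbN]
  split_ifs <;> simp

lemma scal_ji (i : ℕ) (k l : ℤ) :
    -C q⁻¹ * zq (-((i:ℤ)+1)) k * (C (qint l/(l:F)) * zq (-(i:ℤ)) l * C (q^(-l)))
    = C (qint l/(l:F)) * (-C q⁻¹ * zq (-((i:ℤ)+1)) (k+l)) := by
  unfold zq
  rw [T_add]
  ring_nf
  simp only [mul_comm, mul_left_comm, mul_assoc, ← map_mul]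
  congr 4
  rw [show -(k*(i:ℤ)) - l*i - k - l = (-l) + ((-(k*i) - k) + (-(l*i))) by ring,
    zpow_add₀ hq0, zpow_add₀ hq0]
  try ring

lemma scal_ij (j : ℕ) (k l : ℤ) :
    C (qint l/(l:F)) * zq (-((j:ℤ)+1)) l * C (q^l) * (-C q⁻¹ * zq (-(j:ℤ)) k)
    = C (qint l/(l:F)) * (-C q⁻¹ * zq (-(j:ℤ)) (k+l)) := by
  unfold zq
  rw [T_add]
  ring_nf
  simp only [mul_comm, mul_left_comm, mul_assoc, ← map_mul]
  congr 4
  rw [show -(l*(j:ℤ)) - k*j = l + (-(k*j) + (-(l*j) - l)) by ring,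
    zpow_add₀ hq0, zpow_add₀ hq0]
  try ring

lemma scal_eq (i : ℕ) (k l : ℤ) :
    C (qint l/(l:F)) * zq (-(i:ℤ)) l * C (q^(-l)) * (-C q⁻¹ * zq (-(i:ℤ)) k)
    + -C q⁻¹ * zq (-(i:ℤ)) k * (C (qint l/(l:F)) * zq (-(i:ℤ)) l * C (q^l))
    = C (qint (2*l)/(l:F)) * (-C q⁻¹ * zq (-(i:ℤ)) (k+l)) := by
  have hsub : ∀ A B : R, -A - B = -(A+B) := fun A B => by ring
  unfold zq
  rw [T_add]
  ring_nf
  simp only [mul_comm, mul_left_comm, mul_assoc, ← map_mul]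
  rw [hsub]
  simp only [← mul_add, ← map_add]
  congr 4
  rw [show l*2 = 2*l by ring, qint_two,
    show -(l*(i:ℤ)) - k*i = -(l*i) + -(k*i) by ring, zpow_add₀ hq0]
  ring

/-- `[a*_i(l), x*_j⁺(k)] = ([(α_i|α_j)l]/l) x*_j⁺(k+l)` in `M_{n+1}(R)`. -/
theorem as_xps_comm (n : ℕ) (hn : 1 ≤ n) (i j : ℕ) (hi1 : 1 ≤ i) (hin : i ≤ n)
    (hj1 : 1 ≤ j) (hjn : j ≤ n) (k l : ℤ) (hl : l ≠ 0) :
    aops n i l * xps n j k - xps n j k * aops n i l =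
      C (qint (ip i j * l) / (l : F)) • xps n j (k + l) := by
  unfold aops xps
  simp only [smul_sub, smul_smul, sub_mul, mul_sub]
  rw [sE_mul_sE (n+1) (i+1) (i+1) (j+1) j _ _ (by omega) (by omega),
      sE_mul_sE (n+1) i i (j+1) j _ _ (by omega) (by omega),
      sE_mul_sE (n+1) (j+1) j (i+1) (i+1) _ _ (by omega) (by omega),
      sE_mul_sE (n+1) (j+1) j i i _ _ (by omega) (by omega)]
  by_cases hij : i = j
  · subst hij
    simp only [if_pos rfl, if_neg (show ¬ i = i+1 by omega),
      if_neg (show ¬ i+1 = i by omega), ip, if_true, sub_zero, zero_sub,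
      sub_neg_eq_add, smul_smul, ← add_smul]
    congr 1
    exact scal_eq i k l
  · by_cases hji : j = i + 1
    · subst hji
      simp only [if_neg (show ¬ i+1 = i+1+1 by omega),
        if_neg (show ¬ i = i+1+1 by omega), if_pos rfl,
        if_neg (show ¬ i+1 = i by omega), ip, hij, if_false,
        if_pos (Or.inl rfl), sub_zero, zero_sub, smul_smul, if_true, true_or]
      rw [show (-1:ℤ)*l = -l by ring, qint_neg, neg_div, map_neg, neg_mul, ← neg_smul]
      congr 1
      push_cast
      linear_combination (-1 : R) * (scal_ji i k l)
    · by_cases hij2 : i = j + 1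
      · subst hij2
        simp only [if_neg (show ¬ j+1+1 = j+1 by omega), if_pos rfl,
          if_neg (show ¬ j = j+1+1 by omega), if_neg (show ¬ j = j+1 by omega),
          ip, hij, if_false, smul_smul, if_true, or_true, sub_zero, zero_sub]
        rw [show (-1:ℤ)*l = -l by ring, qint_neg, neg_div, map_neg, neg_mul, ← neg_smul]
        congr 1
        push_cast
        linear_combination (-1 : R) * (scal_ij j k l)
      · simp only [if_neg (show ¬ i+1 = j+1 by omega), if_neg hij2,
          if_neg hji, if_neg (fun h : j = i => hij h.symm), ip, hij, if_false,
          if_neg (show ¬ (i+1 = j ∨ j+1 = i) by omega), zero_mul, qint_zero,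
          zero_div, map_zero, zero_smul, sub_zero, zero_sub, neg_zero]
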